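/- arXiv:1208.5175 — 3 statements merged into one kernel-verified Lean document; each statement's English description precedes it below -/
import Mathlib

section
/- Let k > 0 and let b : ℝ² → ℝ be continuous with b(x) ≥ 0 for all x. Suppose p : ℝ² → ℝ is twice continuously differentiable, satisfies Δp(x) − k²·p(x) − b(x)·p(x) = b(x) for all x ∈ ℝ², and vanishes at infinity. Then 1 + p(x) > 0 for every x ∈ ℝ². -/
open MeasureTheory Real Filter Topology

noncomputable section

/-- The plane `ℝ²`. -/
abbrev E2 := EuclideanSpace ℝ (Fin 2)

/-- The Macdonald function `K₀`, via its integral representation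
`K₀(y) = ∫₀^∞ exp(−y·cosh t) dt`. -/
noncomputable def K0 (y : ℝ) : ℝ := ∫ t in Set.Ioi (0 : ℝ), Real.exp (-y * Real.cosh t)

/-- The Laplacian of `f : ℝ² → ℝ`: the sum of its second partial derivatives. -/
noncomputable def lap (f : E2 → ℝ) (x : E2) : ℝ :=
  ∑ i : Fin 2, iteratedFDeriv ℝ 2 f x ![EuclideanSpace.single i 1, EuclideanSpace.single i 1]

/-- A function vanishes at infinity if `f x → 0` as `‖x‖ → ∞`. -/
def VanishesAtInfinity (f : E2 → ℝ) : Prop := Tendsto f (cocompact E2) (𝓝 0)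

/-- The `C^m(s)` norm of `f`: the supremum over `s` of the norms of all derivatives
of order `≤ m`. -/
noncomputable def CNorm (m : ℕ) (f : E2 → ℝ) (s : Set E2) : ℝ :=
  ⨆ x ∈ s, ⨆ i ∈ Finset.range (m + 1), ‖iteratedFDeriv ℝ i f x‖

/-- One-dimensional second derivative test at a global minimum. -/
lemma aux_1d {g g' : ℝ → ℝ} {c : ℝ}
    (hg : ∀ t, HasDerivAt g (g' t) t)
    (hmin : ∀ t, g 0 ≤ g t) (hc : HasDerivAt g' c 0) : 0 ≤ c := by
  by_contra hcn
  push_neg at hcn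
  have hloc : IsLocalMin g 0 := Filter.Eventually.of_forall hmin
  have hg'0 : g' 0 = 0 := hloc.hasDerivAt_eq_zero (hg 0)
  have hslope : Tendsto (slope g' 0) (𝓝[≠] 0) (𝓝 c) :=
    hasDerivAt_iff_tendsto_slope.mp hc
  have hev : ∀ᶠ t in 𝓝[>] (0 : ℝ), slope g' 0 t < 0 :=
    (hslope.mono_left (nhdsWithin_mono _ (fun t ht => ne_of_gt ht))).eventually
      (eventually_lt_nhds hcn)
  obtain ⟨δ, hδ, hδ'⟩ := (nhdsGT_basis (0 : ℝ)).eventually_iff.mp hev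
  have hneg : ∀ t ∈ Set.Ioo (0 : ℝ) δ, g' t < 0 := by
    intro t ht
    have := hδ' ht
    rw [slope_def_field, hg'0, sub_zero, sub_zero, div_neg_iff] at this
    rcases this with ⟨h1, h2⟩ | ⟨h1, h2⟩
    · linarith [ht.1]
    · exact h1
  have hanti : StrictAntiOn g (Set.Icc 0 δ) := by
    apply strictAntiOn_of_deriv_neg (convex_Icc 0 δ)
    · exact fun t _ => (hg t).differentiableAt.continuousAt.continuousWithinAt
    · intro t ht
      rw [interior_Icc] at ht
      rw [(hg t).deriv]
      exact hneg t ht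
  have : g δ < g 0 := hanti (Set.left_mem_Icc.mpr hδ.le) (Set.right_mem_Icc.mpr hδ.le) hδ
  exact absurd (hmin δ) (not_le.mpr this)

/-- Second directional derivative is nonnegative at a global minimum of a C² function. -/
lemma aux_dir {p : E2 → ℝ} (hp : ContDiff ℝ 2 p) {x₀ : E2} (hmin : ∀ y, p x₀ ≤ p y)
    (v : E2) : 0 ≤ iteratedFDeriv ℝ 2 p x₀ ![v, v] := by
  have hdiff : Differentiable ℝ p := hp.differentiable (by norm_num)
  have hfd : ContDiff ℝ 1 (fderiv ℝ p) := hp.fderiv_right (by norm_num)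
  set L : ℝ → E2 := fun t => x₀ + t • v with hL
  have hLd : ∀ t, HasDerivAt L v t := by
    intro t
    simpa [hL] using (((hasDerivAt_id t).smul_const v).const_add x₀)
  have hL0 : L 0 = x₀ := by simp [hL]
  set g : ℝ → ℝ := fun t => p (L t) with hgdef
  set g' : ℝ → ℝ := fun t => fderiv ℝ p (L t) v with hg'def
  have hg : ∀ t, HasDerivAt g (g' t) t := fun t =>
    ((hdiff (L t)).hasFDerivAt).comp_hasDerivAt t (hLd t)
  have hmin' : ∀ t, g 0 ≤ g t := by
    intro t
    simp only [hgdef, hL0]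
    exact hmin (L t)
  have hF : HasFDerivAt (fderiv ℝ p) (fderiv ℝ (fderiv ℝ p) x₀) x₀ :=
    ((hfd.differentiable one_ne_zero) x₀).hasFDerivAt
  have hcomp : HasDerivAt (fun t => fderiv ℝ p (L t)) (fderiv ℝ (fderiv ℝ p) x₀ v) 0 := by
    have h2 : HasFDerivAt (fderiv ℝ p) (fderiv ℝ (fderiv ℝ p) x₀) (L 0) := hL0.symm ▸ hF
    exact h2.comp_hasDerivAt 0 (hLd 0)
  have hc : HasDerivAt g' (fderiv ℝ (fderiv ℝ p) x₀ v v) 0 := by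
    have := hcomp.clm_apply (hasDerivAt_const 0 v)
    simpa [hg'def] using this
  have := aux_1d hg hmin' hc
  rw [iteratedFDeriv_two_apply]
  simpa using this

/-- Lemma 2.1. If `Δp − k²p − b·p = b` with `b` continuous and
nonnegative and `p` C² vanishing at infinity, then `1 + p > 0` everywhere. -/
theorem statement1 (k : ℝ) (hk : 0 < k) (b : E2 → ℝ) (hb : Continuous b)
    (hb0 : ∀ x, 0 ≤ b x) (p : E2 → ℝ) (hp : ContDiff ℝ 2 p)
    (heq : ∀ x, lap p x - k ^ 2 * p x - b x * p x = b x)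
    (hvan : VanishesAtInfinity p) :
    ∀ x, 0 < 1 + p x := by
  by_contra hcon
  push_neg at hcon
  obtain ⟨x₁, hx₁⟩ := hcon
  have hx₁' : p x₁ ≤ -1 := by linarith
  have hev : ∀ᶠ x in cocompact E2, p x₁ ≤ p x := by
    filter_upwards [hvan.eventually (eventually_gt_nhds (show (-1 : ℝ) < 0 by norm_num))]
      with x hx
    linarith
  obtain ⟨z, hz⟩ := hp.continuous.exists_forall_le' x₁ hev
  have hpz : p z ≤ -1 := le_trans (hz x₁) hx₁'
  have hlap : 0 ≤ lap p z :=
    Finset.sum_nonneg fun i _ => aux_dir hp hz (EuclideanSpace.single i 1)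
  have h1 : b z * (1 + p z) ≤ 0 :=
    mul_nonpos_of_nonneg_of_nonpos (hb0 z) (by linarith)
  have hk2 : 0 < k ^ 2 := by positivity
  have := heq z
  nlinarith [mul_le_mul_of_nonneg_left hpz hk2.le]
end
end

section
/- Let k > 0 and let a : ℝ² → ℝ be continuous with a(x) ≥ k² for all x ∈ ℝ². If w : ℝ² → ℝ is twice continuously differentiable, satisfies Δw(x) = a(x)·w(x) for all x ∈ ℝ², and vanishes at infinity, then w is identically zero on ℝ². -/
open MeasureTheory Real Filter Topology

noncomputable section

/-- Second-derivative test: at a global maximum, the second derivative along any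
direction is nonpositive. -/
lemma sndDeriv_nonpos_of_max {f : E2 → ℝ} (hf : ContDiff ℝ 2 f) {z : E2}
    (hz : ∀ y, f y ≤ f z) (v : E2) :
    fderiv ℝ (fderiv ℝ f) z v v ≤ 0 := by
  by_contra hc
  push_neg at hc
  set g1 : ℝ → ℝ := fun t => fderiv ℝ f (z + t • v) v with hg1def
  have hL : ∀ t : ℝ, HasDerivAt (fun t : ℝ => z + t • v) v t := fun t => by
    simpa using ((hasDerivAt_id t).smul_const v).const_add z
  have hfd : Differentiable ℝ f := hf.differentiable (by norm_num)
  have hg : ∀ t : ℝ, HasDerivAt (fun s => f (z + s • v)) (g1 t) t := fun t =>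
    (hfd (z + t • v)).hasFDerivAt.comp_hasDerivAt t (hL t)
  have hf' : ContDiff ℝ 1 (fun y => fderiv ℝ f y) := hf.fderiv_right (by norm_num)
  have hA : HasFDerivAt (fun y => fderiv ℝ f y) (fderiv ℝ (fderiv ℝ f) z) z :=
    (hf'.differentiable (by norm_num) z).hasFDerivAt
  have hg1d : HasDerivAt g1 (fderiv ℝ (fderiv ℝ f) z v v) 0 := by
    have h1 : HasDerivAt (fun t : ℝ => fderiv ℝ f (z + t • v))
        (fderiv ℝ (fderiv ℝ f) z v) 0 := by
      have hz0 : z + (0:ℝ) • v = z := by simp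
      have hA' : HasFDerivAt (fun y => fderiv ℝ f y) (fderiv ℝ (fderiv ℝ f) z)
          (z + (0:ℝ) • v) := by rw [hz0]; exact hA
      have h := hA'.comp_hasDerivAt 0 (hL 0)
      exact h
    have h2 := (ContinuousLinearMap.apply ℝ ℝ v).hasFDerivAt.comp_hasDerivAt 0 h1
    exact h2
  have hmax : IsLocalMax (fun s : ℝ => f (z + s • v)) 0 :=
    Filter.Eventually.of_forall (fun t => by simpa using hz (z + t • v))
  have hg10 : g1 0 = 0 := hmax.hasDerivAt_eq_zero (hg 0)
  have hslope := hasDerivAt_iff_tendsto_slope.1 hg1d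
  have hev : ∀ᶠ t in 𝓝[>] (0:ℝ), 0 < g1 t := by
    have h2 : ∀ᶠ t in 𝓝[≠] (0:ℝ), 0 < slope g1 0 t :=
      hslope.eventually (eventually_gt_nhds hc)
    have h3 : 𝓝[>] (0:ℝ) ≤ 𝓝[≠] 0 := nhdsWithin_mono _ fun t ht => ne_of_gt ht
    filter_upwards [h3 h2, self_mem_nhdsWithin] with t ht ht0
    have hs : slope g1 0 t = g1 t / t := by simp [slope_def_field, hg10]
    rw [hs] at ht
    have : 0 < t := ht0
    nlinarith [div_mul_cancel₀ (g1 t) (ne_of_gt this)]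
  obtain ⟨ε, hε, hsub⟩ := mem_nhdsGT_iff_exists_Ioo_subset.1 hev
  have hε0 : (0:ℝ) < ε := hε
  have hcont : Continuous (fun s : ℝ => f (z + s • v)) :=
    hf.continuous.comp (by continuity)
  have hmono : StrictMonoOn (fun s : ℝ => f (z + s • v)) (Set.Icc 0 ε) := by
    apply strictMonoOn_of_deriv_pos (convex_Icc 0 ε) hcont.continuousOn
    intro t ht
    rw [interior_Icc] at ht
    rw [(hg t).deriv]
    exact hsub ⟨ht.1, ht.2⟩
  have hlt := hmono (Set.left_mem_Icc.2 hε0.le) (Set.right_mem_Icc.2 hε0.le) hε0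
  simp only [zero_smul, add_zero] at hlt
  exact absurd (hz (z + ε • v)) (not_le.2 hlt)

/-- If `w` is positive somewhere, we get a contradiction. -/
lemma aux_pos (k : ℝ) (hk : 0 < k) (a : E2 → ℝ)
    (halb : ∀ x, k ^ 2 ≤ a x) (w : E2 → ℝ) (hw : ContDiff ℝ 2 w)
    (heq : ∀ x, lap w x = a x * w x) (hvan : VanishesAtInfinity w)
    {x₀ : E2} (hpos : 0 < w x₀) : False := by
  have hev : ∀ᶠ x in cocompact E2, w x ≤ w x₀ :=
    hvan.eventually (eventually_le_nhds hpos)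
  obtain ⟨z, hz⟩ := hw.continuous.exists_forall_ge' x₀ hev
  have hwz : 0 < w z := lt_of_lt_of_le hpos (hz x₀)
  have hle : lap w z ≤ 0 := by
    unfold lap
    apply Finset.sum_nonpos
    intro i _
    rw [iteratedFDeriv_two_apply]
    simpa using sndDeriv_nonpos_of_max hw hz (EuclideanSpace.single i 1)
  have hgt : 0 < lap w z := by
    rw [heq]
    exact mul_pos (lt_of_lt_of_le (pow_pos hk 2) (halb z)) hwz
  linarith

/-- uniqueness step of Theorem 2.1. If `Δw = a·w` with `a ≥ k² > 0`
and `w` is C² and vanishes at infinity, then `w ≡ 0`. -/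
theorem statement3 (k : ℝ) (hk : 0 < k) (a : E2 → ℝ) (ha : Continuous a)
    (halb : ∀ x, k ^ 2 ≤ a x) (w : E2 → ℝ) (hw : ContDiff ℝ 2 w)
    (heq : ∀ x, lap w x = a x * w x) (hvan : VanishesAtInfinity w) :
    ∀ x, w x = 0 := by
  intro x
  by_contra hx
  rcases lt_or_gt_of_ne hx with hneg | hpos
  · -- apply aux_pos to -w
    have hw' : ContDiff ℝ 2 (fun y => -w y) := hw.neg
    have heq' : ∀ y, lap (fun y => -w y) y = a y * (-w y) := by
      intro y
      unfold lap
      have : ∀ i : Fin 2,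
          iteratedFDeriv ℝ 2 (fun y => -w y) y
            ![EuclideanSpace.single i 1, EuclideanSpace.single i 1]
          = -(iteratedFDeriv ℝ 2 w y
            ![EuclideanSpace.single i 1, EuclideanSpace.single i 1]) := by
        intro i
        have h := iteratedFDeriv_neg_apply (𝕜 := ℝ) (i := 2) (f := w) (x := y)
        rw [show (fun y => -w y) = -w from rfl, h]
        simp
      rw [Finset.sum_congr rfl fun i _ => this i, Finset.sum_neg_distrib]
      have := heq y
      unfold lap at this
      rw [this]; ring
    have hvan' : VanishesAtInfinity (fun y => -w y) := by
      have := hvan.neg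
      simpa [VanishesAtInfinity] using this
    exact absurd (aux_pos k hk a halb _ hw' heq' hvan' (x₀ := x) (by simpa using hneg)) id
  · exact aux_pos k hk a halb w hw heq hvan hpos
end
end

section
/- Let Ω ⊆ ℝ² be an open set, let a : Ω → ℝ, and let 0 < s̲ < s̄. Let w : Ω × ℝ → ℝ be three times continuously differentiable (jointly in all variables) and suppose that Δₓw(x,s) + s²·‖∇ₓw(x,s)‖² = a(x)/s² for all x ∈ Ω and all s ∈ [s̲, s̄]. Define q(x,s) = ∂w/∂s(x,s) and T(x) = w(x, s̄). Then for every x ∈ Ω and every s ∈ [s̲, s̄]: Δₓq(x,s) − (2/s)·∫_s^{s̄} Δₓq(x,τ) dτ − 2s²·∇ₓq(x,s)·∫_s^{s̄} ∇ₓq(x,τ) dτ + 4s·‖−∫_s^{s̄} ∇ₓq(x,τ) dτ + ∇T(x)‖² + 2s²·∇T(x)·∇ₓq(x,s) = −(2/s)·ΔT(x). -/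
open MeasureTheory Real Filter Topology

noncomputable section

/-! ### Auxiliary lemmas -/

lemma aux_slice_fderiv2 {U : Set (E2 × ℝ)} (hU : IsOpen U) {F' : Type*} [NormedAddCommGroup F']
    [NormedSpace ℝ F'] (f : E2 × ℝ → F') (hf : ContDiffOn ℝ 2 f U) (x : E2) (t : ℝ)
    (hxt : (x, t) ∈ U) (u v : E2) :
    fderiv ℝ (fderiv ℝ (fun y => f (y, t))) x u v
      = fderiv ℝ (fderiv ℝ f) (x, t) (u, 0) (v, 0) := by
  have hdf : ∀ p ∈ U, DifferentiableAt ℝ f p := fun p hp =>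
    (hf.contDiffAt (hU.mem_nhds hp)).differentiableAt (by norm_num)
  have hdf' : ContDiffOn ℝ 1 (fderiv ℝ f) U := hf.fderiv_of_isOpen hU (by norm_num)
  have hUt : IsOpen {y : E2 | (y, t) ∈ U} := hU.preimage (continuous_id.prodMk continuous_const)
  have hev : fderiv ℝ (fun y => f (y, t)) =ᶠ[𝓝 x]
      fun y => (fderiv ℝ f (y, t)).comp (ContinuousLinearMap.inl ℝ E2 ℝ) := by
    filter_upwards [hUt.mem_nhds hxt] with y hy
    exact ((hdf _ hy).hasFDerivAt.comp y (hasFDerivAt_prodMk_left y t)).fderiv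
  rw [hev.fderiv_eq]
  have hcslice : HasFDerivAt (fun y => fderiv ℝ f (y, t))
      ((fderiv ℝ (fderiv ℝ f) (x, t)).comp (ContinuousLinearMap.inl ℝ E2 ℝ)) x :=
    ((hdf'.contDiffAt (hU.mem_nhds hxt)).differentiableAt (by norm_num)).hasFDerivAt.comp x
      (hasFDerivAt_prodMk_left x t)
  rw [fderiv_clm_comp hcslice.differentiableAt (differentiableAt_const _), hcslice.fderiv]
  simp

lemma aux_lap_slice {U : Set (E2 × ℝ)} (hU : IsOpen U) (f : E2 × ℝ → ℝ)
    (hf : ContDiffOn ℝ 2 f U) (x : E2) (t : ℝ) (hxt : (x, t) ∈ U) :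
    lap (fun y => f (y, t)) x
      = ∑ i : Fin 2, fderiv ℝ (fderiv ℝ f) (x, t)
          (EuclideanSpace.single i 1, 0) (EuclideanSpace.single i 1, 0) := by
  unfold lap
  refine Finset.sum_congr rfl fun i _ => ?_
  rw [iteratedFDeriv_two_apply]
  simpa using aux_slice_fderiv2 hU f hf x t hxt _ _

lemma aux_lap_congr {f g : E2 → ℝ} {x : E2} (h : f =ᶠ[𝓝 x] g) : lap f x = lap g x := by
  unfold lap
  refine Finset.sum_congr rfl fun i _ => ?_
  congr 1
  rw [← iteratedFDerivWithin_univ, ← iteratedFDerivWithin_univ]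
  exact Filter.EventuallyEq.iteratedFDerivWithin_eq (by simpa [nhdsWithin_univ] using h)
    h.self_of_nhds 2

lemma aux_gradient_congr {f g : E2 → ℝ} {x : E2} (h : f =ᶠ[𝓝 x] g) :
    gradient f x = gradient g x := by
  unfold gradient
  rw [h.fderiv_eq]

noncomputable instance aux_inst3 : NormedAddCommGroup (E2 × ℝ →L[ℝ] E2 × ℝ →L[ℝ] E2 × ℝ →L[ℝ] ℝ) :=
  @ContinuousLinearMap.toNormedAddCommGroup ℝ ℝ (E2 × ℝ) (E2 × ℝ →L[ℝ] E2 × ℝ →L[ℝ] ℝ) _ _ _ _ _ _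
    (RingHom.id ℝ) _

noncomputable instance aux_inst3' : NormedSpace ℝ (E2 × ℝ →L[ℝ] E2 × ℝ →L[ℝ] E2 × ℝ →L[ℝ] ℝ) :=
  ContinuousLinearMap.toNormedSpace (𝕜 := ℝ) (𝕜₂ := ℝ) (E := E2 × ℝ)
    (F := E2 × ℝ →L[ℝ] E2 × ℝ →L[ℝ] ℝ) (σ₁₂ := RingHom.id ℝ)

set_option maxHeartbeats 2000000 in
/-- the integro-differential equation (3.5). Differentiating
`Δw + s²|∇w|² = a/s²` in the source parameter `s` and substituting
`w(x,s) = −∫_s^{s̄} q(x,τ)dτ + T(x)`, where `q = ∂_s w` and `T(x) = w(x,s̄)`,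
eliminates the coefficient `a`. -/
theorem statement6 (Ω : Set E2) (hΩopen : IsOpen Ω) (a : E2 → ℝ) (sl su : ℝ)
    (hsl : 0 < sl) (hslsu : sl < su) (w : E2 × ℝ → ℝ)
    (hw : ContDiffOn ℝ 3 w (Ω ×ˢ (Set.univ : Set ℝ)))
    (heq : ∀ x ∈ Ω, ∀ s ∈ Set.Icc sl su,
      lap (fun y => w (y, s)) x + s ^ 2 * ‖gradient (fun y => w (y, s)) x‖ ^ 2
        = a x / s ^ 2) :
    ∀ x ∈ Ω, ∀ s ∈ Set.Icc sl su,
      lap (fun y => deriv (fun t => w (y, t)) s) x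
        - (2 / s) * (∫ τ in s..su, lap (fun y => deriv (fun t => w (y, t)) τ) x)
        - 2 * s ^ 2 * inner ℝ (gradient (fun y => deriv (fun t => w (y, t)) s) x)
            (∫ τ in s..su, gradient (fun y => deriv (fun t => w (y, t)) τ) x)
        + 4 * s * ‖-(∫ τ in s..su, gradient (fun y => deriv (fun t => w (y, t)) τ) x)
            + gradient (fun y => w (y, su)) x‖ ^ 2
        + 2 * s ^ 2 * inner ℝ (gradient (fun y => w (y, su)) x)
            (gradient (fun y => deriv (fun t => w (y, t)) s) x)
      = -(2 / s) * lap (fun y => w (y, su)) x := by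
  intro x hx s hs
  have hspos : 0 < s := lt_of_lt_of_le hsl hs.1
  have hs0 : s ≠ 0 := ne_of_gt hspos
  set U : Set (E2 × ℝ) := Ω ×ˢ (Set.univ : Set ℝ) with hUdef
  have hU : IsOpen U := hΩopen.prod isOpen_univ
  have hmem : ∀ t : ℝ, ∀ y ∈ Ω, (y, t) ∈ U := fun t y hy => ⟨hy, trivial⟩
  have hmx : ∀ t : ℝ, (x, t) ∈ U := fun t => ⟨hx, trivial⟩
  -- smoothness ladder
  have hw1 : ContDiffOn ℝ 2 (fderiv ℝ w) U := hw.fderiv_of_isOpen hU (by norm_num)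
  have hw2 : ContDiffOn ℝ 1 (fderiv ℝ (fderiv ℝ w)) U := hw1.fderiv_of_isOpen hU (by norm_num)
  have hw3 : ContDiffOn ℝ 0 (fderiv ℝ (fderiv ℝ (fderiv ℝ w))) U :=
    hw2.fderiv_of_isOpen hU (by norm_num)
  have hdw : ∀ p ∈ U, DifferentiableAt ℝ w p := fun p hp =>
    (hw.contDiffAt (hU.mem_nhds hp)).differentiableAt (by norm_num)
  have hdw1 : ∀ p ∈ U, DifferentiableAt ℝ (fderiv ℝ w) p := fun p hp =>
    (hw1.contDiffAt (hU.mem_nhds hp)).differentiableAt (by norm_num)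
  have hdw2 : ∀ p ∈ U, DifferentiableAt ℝ (fderiv ℝ (fderiv ℝ w)) p := fun p hp =>
    (hw2.contDiffAt (hU.mem_nhds hp)).differentiableAt (by norm_num)
  -- the t-partial derivative
  have hq : ∀ t : ℝ, ∀ y ∈ Ω, deriv (fun t' => w (y, t')) t = fderiv ℝ w (y, t) (0, 1) :=
    fun t y hy => ((hdw _ (hmem t y hy)).hasFDerivAt.comp_hasDerivAt t
      ((hasDerivAt_const t y).prodMk (hasDerivAt_id t))).deriv
  set W₁ : E2 × ℝ → ℝ := fun p => fderiv ℝ w p (0, 1) with hW₁def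
  have hW₁C2 : ContDiffOn ℝ 2 W₁ U := hw1.clm_apply contDiffOn_const
  have hfW₁ : ∀ p ∈ U, HasFDerivAt W₁ (fderiv ℝ (fderiv ℝ w) p ((0 : E2), (1 : ℝ))) p := by
    intro p hp
    have hsymm : IsSymmSndFDerivAt ℝ w p :=
      (hw.contDiffAt (hU.mem_nhds hp)).isSymmSndFDerivAt (by norm_num)
    have h1 := (hdw1 p hp).hasFDerivAt.clm_apply (hasFDerivAt_const ((0 : E2), (1 : ℝ)) p)
    have h2 : (fderiv ℝ w p).comp (0 : (E2 × ℝ) →L[ℝ] (E2 × ℝ))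
        + (fderiv ℝ (fderiv ℝ w) p).flip ((0 : E2), (1 : ℝ))
        = fderiv ℝ (fderiv ℝ w) p ((0 : E2), (1 : ℝ)) := by
      refine ContinuousLinearMap.ext fun u => ?_
      simp only [ContinuousLinearMap.add_apply, ContinuousLinearMap.comp_apply,
        ContinuousLinearMap.zero_apply, map_zero, zero_add, ContinuousLinearMap.flip_apply]
      exact hsymm u ((0 : E2), (1 : ℝ))
    rwa [h2] at h1
  -- shorthand scalar and vector functions of the parameter
  set g : ℝ → ℝ := fun τ => ∑ i : Fin 2, fderiv ℝ (fderiv ℝ w) (x, τ)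
    (EuclideanSpace.single i 1, 0) (EuclideanSpace.single i 1, 0) with hgdef
  set gq : ℝ → ℝ := fun τ => ∑ i : Fin 2, fderiv ℝ (fderiv ℝ (fderiv ℝ w)) (x, τ)
    ((0 : E2), (1 : ℝ)) (EuclideanSpace.single i 1, 0) (EuclideanSpace.single i 1, 0) with hgqdef
  set G : ℝ → E2 := fun τ => (InnerProductSpace.toDual ℝ E2).symm
    ((fderiv ℝ w (x, τ)).comp (ContinuousLinearMap.inl ℝ E2 ℝ)) with hGdef
  set Gq : ℝ → E2 := fun τ => (InnerProductSpace.toDual ℝ E2).symm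
    ((fderiv ℝ (fderiv ℝ w) (x, τ) ((0 : E2), (1 : ℝ))).comp
      (ContinuousLinearMap.inl ℝ E2 ℝ)) with hGqdef
  -- identification of the goal's terms
  have hlapw : ∀ τ : ℝ, lap (fun y => w (y, τ)) x = g τ := fun τ =>
    aux_lap_slice hU w (hw.of_le (by norm_num)) x τ (hmx τ)
  have hevq : ∀ τ : ℝ, (fun y => deriv (fun t => w (y, t)) τ) =ᶠ[𝓝 x]
      fun y => W₁ (y, τ) := by
    intro τ
    filter_upwards [hΩopen.mem_nhds hx] with y hy using hq τ y hy
  have hlapq : ∀ τ : ℝ, lap (fun y => deriv (fun t => w (y, t)) τ) x = gq τ := by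
    intro τ
    rw [aux_lap_congr (hevq τ), aux_lap_slice hU W₁ hW₁C2 x τ (hmx τ)]
    refine Finset.sum_congr rfl fun i _ => ?_
    have hev : fderiv ℝ W₁ =ᶠ[𝓝 ((x, τ) : E2 × ℝ)]
        fun p => fderiv ℝ (fderiv ℝ w) p ((0 : E2), (1 : ℝ)) := by
      filter_upwards [hU.mem_nhds (hmx τ)] with p hp using (hfW₁ p hp).fderiv
    rw [hev.fderiv_eq]
    have h1 := (hdw2 (x, τ) (hmx τ)).hasFDerivAt.clm_apply
      (hasFDerivAt_const ((0 : E2), (1 : ℝ)) ((x, τ) : E2 × ℝ))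
    rw [h1.fderiv]
    have hsymm1 : IsSymmSndFDerivAt ℝ (fderiv ℝ w) (x, τ) :=
      (hw1.contDiffAt (hU.mem_nhds (hmx τ))).isSymmSndFDerivAt (by simp)
    simp only [ContinuousLinearMap.add_apply, ContinuousLinearMap.comp_apply,
      ContinuousLinearMap.zero_apply, map_zero, zero_add, ContinuousLinearMap.flip_apply]
    rw [hsymm1 (EuclideanSpace.single i 1, (0 : ℝ)) ((0 : E2), (1 : ℝ))]
  have hgradw : ∀ τ : ℝ, gradient (fun y => w (y, τ)) x = G τ := by
    intro τ
    have h1 : fderiv ℝ (fun y => w (y, τ)) x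
        = (fderiv ℝ w (x, τ)).comp (ContinuousLinearMap.inl ℝ E2 ℝ) :=
      ((hdw _ (hmx τ)).hasFDerivAt.comp x (hasFDerivAt_prodMk_left x τ)).fderiv
    show (InnerProductSpace.toDual ℝ E2).symm (fderiv ℝ (fun y => w (y, τ)) x) = G τ
    rw [h1]
  have hgradq : ∀ τ : ℝ, gradient (fun y => deriv (fun t => w (y, t)) τ) x = Gq τ := by
    intro τ
    rw [aux_gradient_congr (hevq τ)]
    have h1 : fderiv ℝ (fun y => W₁ (y, τ)) x
        = (fderiv ℝ W₁ (x, τ)).comp (ContinuousLinearMap.inl ℝ E2 ℝ) :=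
      by have h := (((hW₁C2.contDiffAt (hU.mem_nhds (hmx τ))).differentiableAt
        two_ne_zero).hasFDerivAt.comp x (hasFDerivAt_prodMk_left (𝕜 := ℝ) x τ)).fderiv; exact h
    show (InnerProductSpace.toDual ℝ E2).symm (fderiv ℝ (fun y => W₁ (y, τ)) x) = Gq τ
    rw [h1, (hfW₁ (x, τ) (hmx τ)).fderiv]
  -- derivatives in the parameter
  have hcurve : ∀ τ : ℝ, HasDerivAt (fun t => ((x, t) : E2 × ℝ)) ((0 : E2), (1 : ℝ)) τ :=
    fun τ => (hasDerivAt_const τ x).prodMk (hasDerivAt_id τ)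
  have hDwcurve : ∀ τ : ℝ, HasDerivAt (fun t => fderiv ℝ w (x, t))
      (fderiv ℝ (fderiv ℝ w) (x, τ) ((0 : E2), (1 : ℝ))) τ := fun τ =>
    (hdw1 _ (hmx τ)).hasFDerivAt.comp_hasDerivAt τ (hcurve τ)
  have hD2wcurve : ∀ τ : ℝ, HasDerivAt (fun t => fderiv ℝ (fderiv ℝ w) (x, t))
      (fderiv ℝ (fderiv ℝ (fderiv ℝ w)) (x, τ) ((0 : E2), (1 : ℝ))) τ := fun τ =>
    (hdw2 _ (hmx τ)).hasFDerivAt.comp_hasDerivAt (l := fderiv ℝ (fderiv ℝ w)) τ (hcurve τ)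
  have hgder : ∀ τ : ℝ, HasDerivAt g (gq τ) τ := by
    intro τ
    refine HasDerivAt.fun_sum fun i _ => ?_
    have ha := (ContinuousLinearMap.apply ℝ ((E2 × ℝ) →L[ℝ] ℝ)
      ((EuclideanSpace.single i 1 : E2), (0 : ℝ))).hasFDerivAt.comp_hasDerivAt (f := fun t => fderiv ℝ (fderiv ℝ w) (x, t)) τ
        (hD2wcurve τ)
    have hb := (ContinuousLinearMap.apply ℝ ℝ
      ((EuclideanSpace.single i 1 : E2), (0 : ℝ))).hasFDerivAt.comp_hasDerivAt τ ha
    exact hb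
  have hGder : ∀ τ : ℝ, HasDerivAt G (Gq τ) τ := by
    intro τ
    have h2 : HasDerivAt (fun t => (fderiv ℝ w (x, t)).comp (ContinuousLinearMap.inl ℝ E2 ℝ))
        ((fderiv ℝ (fderiv ℝ w) (x, τ) ((0 : E2), (1 : ℝ))).comp
          (ContinuousLinearMap.inl ℝ E2 ℝ)) τ :=
      ((ContinuousLinearMap.compL ℝ E2 (E2 × ℝ) ℝ).flip
        (ContinuousLinearMap.inl ℝ E2 ℝ)).hasFDerivAt.comp_hasDerivAt τ (hDwcurve τ)
    exact ((InnerProductSpace.toDual ℝ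
      E2).symm.toContinuousLinearEquiv.toContinuousLinearMap.hasFDerivAt.comp_hasDerivAt τ h2)
  -- continuity in the parameter
  have hcont2 : Continuous fun τ => fderiv ℝ (fderiv ℝ w) (x, τ) :=
    hw2.continuousOn.comp_continuous (continuous_const.prodMk continuous_id) fun τ => hmx τ
  have hcont3 : Continuous fun τ => fderiv ℝ (fderiv ℝ (fderiv ℝ w)) (x, τ) :=
    hw3.continuousOn.comp_continuous (continuous_const.prodMk continuous_id) fun τ => hmx τ
  have hcontgq : Continuous gq := by
    refine continuous_finset_sum _ fun i _ => ?_
    exact ((hcont3.clm_apply continuous_const).clm_apply continuous_const).clm_apply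
      continuous_const
  have hcontGq : Continuous Gq :=
    (InnerProductSpace.toDual ℝ E2).symm.continuous.comp
      ((hcont2.clm_apply continuous_const).clm_comp_const _)
  -- fundamental theorem of calculus
  have hIg : (∫ τ in s..su, lap (fun y => deriv (fun t => w (y, t)) τ) x) = g su - g s := by
    simp only [hlapq]
    exact intervalIntegral.integral_eq_sub_of_hasDerivAt (fun τ _ => hgder τ)
      (hcontgq.intervalIntegrable s su)
  have hIG : (∫ τ in s..su, gradient (fun y => deriv (fun t => w (y, t)) τ) x)
      = G su - G s := by
    simp only [hgradq]
    exact intervalIntegral.integral_eq_sub_of_hasDerivAt (fun τ _ => hGder τ)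
      (hcontGq.intervalIntegrable s su)
  -- differentiating the PDE in the parameter
  have hnorm : ∀ τ : ℝ, ‖G τ‖ ^ 2 = (inner ℝ (G τ) (G τ) : ℝ) := fun τ =>
    (real_inner_self_eq_norm_sq _).symm
  have hnormder : HasDerivAt (fun τ => ‖G τ‖ ^ 2)
      ((inner ℝ (G s) (Gq s) : ℝ) + (inner ℝ (Gq s) (G s) : ℝ)) s := by
    rw [show (fun τ => ‖G τ‖ ^ 2) = fun τ => (inner ℝ (G τ) (G τ) : ℝ) from funext hnorm]
    exact (hGder s).inner ℝ (hGder s)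
  have hFder := ((hgder s).add ((hasDerivAt_pow 2 s).mul hnormder)).sub
    ((hasDerivAt_const s (a x)).div (hasDerivAt_pow 2 s) (pow_ne_zero 2 hs0))
  have hF0 : ∀ τ ∈ Set.Icc sl su, g τ + τ ^ 2 * ‖G τ‖ ^ 2 - a x / τ ^ 2 = 0 := by
    intro τ hτ
    have h := heq x hx τ hτ
    rw [hlapw, hgradw] at h
    simpa [sub_eq_zero] using h
  have hu := uniqueDiffOn_Icc hslsu s hs
  have hD0 := (hFder.hasDerivWithinAt.derivWithin hu).symm.trans
    (((hasDerivWithinAt_const s (Set.Icc sl su) (0 : ℝ)).congr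
      (fun y hy => hF0 y hy) (hF0 s hs)).derivWithin hu)
  have hE2eq : g s + s ^ 2 * ‖G s‖ ^ 2 = a x / s ^ 2 := by
    have h := heq x hx s hs
    rwa [hlapw, hgradw] at h
  have hax : a x = s ^ 2 * (g s + s ^ 2 * ‖G s‖ ^ 2) := by
    field_simp at hE2eq ⊢
    linarith
  rw [hax] at hD0
  have hcomm : (inner ℝ (G s) (Gq s) : ℝ) = (inner ℝ (Gq s) (G s) : ℝ) := real_inner_comm _ _
  rw [hcomm] at hD0
  have hkey : gq s + 2 / s * g s + 2 * s ^ 2 * (inner ℝ (Gq s) (G s) : ℝ)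
      + 4 * s * ‖G s‖ ^ 2 = 0 := by
    push_cast at hD0
    field_simp at hD0
    have hinv : s * s⁻¹ = 1 := mul_inv_cancel₀ hs0
    refine mul_left_cancel₀ (pow_ne_zero 2 hs0) ?_
    linear_combination hD0 + 2 * s * g s * hinv
  -- final assembly
  rw [hIg, hIG, hlapq, hgradq, hgradw, hlapw]
  have hGs : -(G su - G s) + G su = G s := by abel
  rw [hGs, inner_sub_right, real_inner_comm (G su) (Gq s)]
  linear_combination hkey
end
end
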